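/- For every λ ≥ 0 and all x, y ∈ ℤ^d, the annealed two-point function is subadditive: b_λ(x + y) ≤ b_λ(x) + b_λ(y). -/

import Mathlib

open MeasureTheory ProbabilityTheory Filter Topology Set Pointwise

noncomputable section

namespace RWRP

/-- The `2d` unit steps in `ℤ^d`. -/
def unitSteps (d : ℕ) : Finset (Fin d → ℤ) :=
  (Finset.univ : Finset (Fin d × Bool)).image
    (fun p => fun j => if j = p.1 then (if p.2 then 1 else -1) else 0)

/-- The uniform distribution on the `2d` unit steps of `ℤ^d`. -/
def stepDist (d : ℕ) : Measure (Fin d → ℤ) :=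
  ((unitSteps d).card : ENNReal)⁻¹ • ∑ s ∈ unitSteps d, Measure.dirac s

/-- `S` is the symmetric nearest-neighbor random walk on `ℤ^d` under `P`, started at the
origin: `S 0 = 0` and the increments are i.i.d., uniformly distributed on the unit steps. -/
def IsSRW {d : ℕ} {Ω : Type*} [MeasurableSpace Ω] (P : Measure Ω)
    (S : ℕ → Ω → Fin d → ℤ) : Prop :=
  (∀ ω, S 0 ω = 0) ∧ (∀ n, Measurable (S n)) ∧
    (∀ n, Measure.map (fun ω => S (n + 1) ω - S n ω) P = stepDist d) ∧
    iIndepFun (fun n ω => S (n + 1) ω - S n ω) P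

/-- The `ℓ¹`-norm of a point of `ℤ^d`. -/
def norm1Z {d : ℕ} (x : Fin d → ℤ) : ℝ := ∑ i, |(x i : ℝ)|

/-- The `ℓ¹`-norm on `ℝ^d`. -/
def norm1R {d : ℕ} (x : Fin d → ℝ) : ℝ := ∑ i, |x i|

/-- The embedding `ℤ^d → ℝ^d`. -/
def zToR {d : ℕ} (x : Fin d → ℤ) : Fin d → ℝ := fun i => (x i : ℝ)

/-- Euclidean scalar product on `ℝ^d`. -/
def dotR {d : ℕ} (h x : Fin d → ℝ) : ℝ := ∑ i, h i * x i

/-- `f` is a norm on `ℝ^d`. -/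
def IsNorm {d : ℕ} (f : (Fin d → ℝ) → ℝ) : Prop :=
  (∀ x, 0 ≤ f x) ∧ (∀ x, f x = 0 ↔ x = 0) ∧
    (∀ (c : ℝ) (x), f (c • x) = |c| * f x) ∧ ∀ x y, f (x + y) ≤ f x + f y

/-- The dual norm `f*(ℓ) = sup_{x ≠ 0} (ℓ·x)/f(x)`. -/
def dualNorm {d : ℕ} (f : (Fin d → ℝ) → ℝ) (ℓ : Fin d → ℝ) : ℝ :=
  ⨆ x : {x : Fin d → ℝ // x ≠ 0}, dotR ℓ x.1 / f x.1

/-- Number of visits of the walk to `x` during `1 ≤ m ≤ n`. -/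
def localTime {d : ℕ} {Ω : Type*} (S : ℕ → Ω → Fin d → ℤ) (x : Fin d → ℤ) (n : ℕ)
    (ω : Ω) : ℕ :=
  ((Finset.Icc 1 n).filter (fun m => S m ω = x)).card

/-- Time of the first visit of the walk to the site `x`. -/
def hitTime {d : ℕ} {Ω : Type*} (S : ℕ → Ω → Fin d → ℤ) (x : Fin d → ℤ) (ω : Ω) : ℕ :=
  sInf {n : ℕ | S n ω = x}

/-- The event that the walk ever visits the site `x`, i.e. `H(x) < ∞`. -/
def hits {d : ℕ} {Ω : Type*} (S : ℕ → Ω → Fin d → ℤ) (x : Fin d → ℤ) : Set Ω :=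
  {ω | ∃ n, S n ω = x}

/-- Entrance time of the walk into the half-space `{x : ℓ·x ≥ u}`. -/
def hitHalf {d : ℕ} {Ω : Type*} (S : ℕ → Ω → Fin d → ℤ) (ℓ : Fin d → ℝ) (u : ℝ)
    (ω : Ω) : ℕ :=
  sInf {n : ℕ | u ≤ dotR ℓ (zToR (S n ω))}

/-- The annealed path potential `Φ(n) = Σ_{x ∈ ℤ^d} φ(l_x(n))`. -/
def annPotential {d : ℕ} {Ω : Type*} (φ : ℝ → ℝ) (S : ℕ → Ω → Fin d → ℤ) (n : ℕ)
    (ω : Ω) : ℝ :=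
  ∑' x : Fin d → ℤ, φ (localTime S x n ω)

/-- Assumptions (An) on the annealed potential shape function `φ`. -/
def IsGoodPhi (φ : ℝ → ℝ) : Prop :=
  φ 0 = 0 ∧ (∀ t, 0 ≤ t → 0 ≤ φ t) ∧ MonotoneOn φ (Ici 0) ∧ ConcaveOn ℝ (Ici 0) φ ∧
    (∃ t, 0 ≤ t ∧ φ t ≠ 0) ∧ Tendsto (fun t => φ t / t) atTop (𝓝 0)

/-- The annealed two-point function `b_λ(x)`. -/
def twoPointB {d : ℕ} {Ω : Type*} [MeasurableSpace Ω] (P : Measure Ω) (φ : ℝ → ℝ)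
    (S : ℕ → Ω → Fin d → ℤ) (lam : ℝ) (x : Fin d → ℤ) : ℝ :=
  -Real.log (∫ ω, Set.indicator (hits S x)
    (fun ω' => Real.exp (-(lam * (hitTime S x ω' : ℝ))
      - annPotential φ S (hitTime S x ω') ω')) ω ∂P)

/-- The quenched path potential `Ψ(n,ω) = Σ_{1 ≤ m ≤ n} V_{S(m)}(ω)`. -/
def quPotential {d : ℕ} {Ω Ωe : Type*} (V : (Fin d → ℤ) → Ωe → ℝ)
    (S : ℕ → Ω → Fin d → ℤ) (n : ℕ) (ωe : Ωe) (ω : Ω) : ℝ :=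
  ∑ m ∈ Finset.Icc 1 n, V (S m ω) ωe

/-- The quenched two-point function `a_λ(x,ω)`. -/
def twoPointA {d : ℕ} {Ω Ωe : Type*} [MeasurableSpace Ω] (P : Measure Ω)
    (V : (Fin d → ℤ) → Ωe → ℝ) (S : ℕ → Ω → Fin d → ℤ) (lam : ℝ) (x : Fin d → ℤ)
    (ωe : Ωe) : ℝ :=
  -Real.log (∫ ω, Set.indicator (hits S x)
    (fun ω' => Real.exp (-(lam * (hitTime S x ω' : ℝ))
      - quPotential V S (hitTime S x ω') ωe ω')) ω ∂P)

/-- Assumptions (Qu) on the random potential `𝕍 = (V_x)`: i.i.d., nonnegative, nontrivial,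
in `L^d`, with essential infimum `0`. -/
def IsIIDPotential {d : ℕ} {Ωe : Type*} [MeasurableSpace Ωe] (μ : Measure Ωe)
    (V : (Fin d → ℤ) → Ωe → ℝ) : Prop :=
  (∀ x, Measurable (V x)) ∧
    (∀ x, ∀ᵐ ωe ∂μ, 0 ≤ V x ωe) ∧
    iIndepFun V μ ∧
    (∀ x, Measure.map (V x) μ = Measure.map (V 0) μ) ∧
    (¬∃ c : ℝ, V 0 =ᵐ[μ] fun _ => c) ∧
    MemLp (V 0) d μ ∧
    essInf (V 0) μ = 0

/-- The quenched shape theorem property for the family `α` of Lyapunov norms: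
`a_λ(x_k, ·)/α_λ(x_k) → 1` almost surely along any `‖x_k‖₁ → ∞`. -/
def QuShape {d : ℕ} {Ω Ωe : Type*} [MeasurableSpace Ω] [MeasurableSpace Ωe]
    (P : Measure Ω) (μ : Measure Ωe) (V : (Fin d → ℤ) → Ωe → ℝ)
    (S : ℕ → Ω → Fin d → ℤ) (α : ℝ → (Fin d → ℝ) → ℝ) : Prop :=
  ∀ lam : ℝ, 0 ≤ lam → ∃ F : Set Ωe, μ Fᶜ = 0 ∧
    ∀ ωe ∈ F, ∀ xs : ℕ → Fin d → ℤ, Tendsto (fun k => norm1Z (xs k)) atTop atTop →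
      Tendsto (fun k => twoPointA P V S lam (xs k) ωe / α lam (zToR (xs k))) atTop (𝓝 1)

/-- The annealed shape theorem property for the family `β` of Lyapunov norms:
`b_λ(x_k)/β_λ(x_k) → 1` along any `‖x_k‖₁ → ∞`. -/
def AnShape {d : ℕ} {Ω : Type*} [MeasurableSpace Ω] (P : Measure Ω) (φ : ℝ → ℝ)
    (S : ℕ → Ω → Fin d → ℤ) (β : ℝ → (Fin d → ℝ) → ℝ) : Prop :=
  ∀ lam : ℝ, 0 ≤ lam → ∀ xs : ℕ → Fin d → ℤ,
    Tendsto (fun k => norm1Z (xs k)) atTop atTop →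
      Tendsto (fun k => twoPointB P φ S lam (xs k) / β lam (zToR (xs k))) atTop (𝓝 1)

/-- The rate function `x ↦ sup_{λ ≥ 0} (β_λ(x) − λ)`, with values in `EReal`. -/
def rateFn {d : ℕ} (β : ℝ → (Fin d → ℝ) → ℝ) (x : Fin d → ℝ) : EReal :=
  ⨆ (lam : ℝ) (_ : 0 ≤ lam), ((β lam x - lam : ℝ) : EReal)

/-- The free energy `sup_{x ∈ ℝ^d} (h·x − I(x))`, with values in `EReal`. -/
def freeEnergySup {d : ℕ} (β : ℝ → (Fin d → ℝ) → ℝ) (h : Fin d → ℝ) : EReal :=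
  ⨆ x : Fin d → ℝ, ((dotR h x : ℝ) : EReal) - rateFn β x

/-- The tilted rate function `x ↦ I(x) − h·x + sup_y (h·y − I(y))`. -/
def tiltedRate {d : ℕ} (β : ℝ → (Fin d → ℝ) → ℝ) (h x : Fin d → ℝ) : EReal :=
  rateFn β x - ((dotR h x : ℝ) : EReal) + freeEnergySup β h

/-- The annealed partition function `Z_n^h`. -/
def Zan {d : ℕ} {Ω : Type*} [MeasurableSpace Ω] (P : Measure Ω) (φ : ℝ → ℝ)
    (S : ℕ → Ω → Fin d → ℤ) (h : Fin d → ℝ) (n : ℕ) : ℝ :=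
  ∫ ω, Real.exp (dotR h (zToR (S n ω)) - annPotential φ S n ω) ∂P

/-- The annealed path measure `Q_n^h`, as an `ℝ≥0∞`-valued set function. -/
def Qan {d : ℕ} {Ω : Type*} [MeasurableSpace Ω] (P : Measure Ω) (φ : ℝ → ℝ)
    (S : ℕ → Ω → Fin d → ℤ) (h : Fin d → ℝ) (n : ℕ) (B : Set Ω) : ENNReal :=
  (∫⁻ ω in B, ENNReal.ofReal (Real.exp (dotR h (zToR (S n ω)) - annPotential φ S n ω)) ∂P) /
    ∫⁻ ω, ENNReal.ofReal (Real.exp (dotR h (zToR (S n ω)) - annPotential φ S n ω)) ∂P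

/-- The quenched partition function `Z_{n,ω}^h`. -/
def Zqu {d : ℕ} {Ω Ωe : Type*} [MeasurableSpace Ω] (P : Measure Ω)
    (V : (Fin d → ℤ) → Ωe → ℝ) (S : ℕ → Ω → Fin d → ℤ) (h : Fin d → ℝ) (n : ℕ)
    (ωe : Ωe) : ℝ :=
  ∫ ω, Real.exp (dotR h (zToR (S n ω)) - quPotential V S n ωe ω) ∂P

/-- The quenched path measure `Q_{n,ω}^h`, as an `ℝ≥0∞`-valued set function. -/
def Qqu {d : ℕ} {Ω Ωe : Type*} [MeasurableSpace Ω] (P : Measure Ω)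
    (V : (Fin d → ℤ) → Ωe → ℝ) (S : ℕ → Ω → Fin d → ℤ) (h : Fin d → ℝ) (n : ℕ)
    (ωe : Ωe) (B : Set Ω) : ENNReal :=
  (∫⁻ ω in B, ENNReal.ofReal (Real.exp (dotR h (zToR (S n ω)) - quPotential V S n ωe ω)) ∂P) /
    ∫⁻ ω, ENNReal.ofReal (Real.exp (dotR h (zToR (S n ω)) - quPotential V S n ωe ω)) ∂P

section Subadd
set_option linter.unusedSectionVars false

variable {d : ℕ} {Ω : Type*} [MeasurableSpace Ω]

/-! ### Properties of `φ` -/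

lemma phi_nat_nonneg {φ : ℝ → ℝ} (hφ : IsGoodPhi φ) (k : ℕ) : 0 ≤ φ k :=
  hφ.2.1 k (by positivity)

lemma phi_nat_mono {φ : ℝ → ℝ} (hφ : IsGoodPhi φ) {a b : ℕ} (h : a ≤ b) : φ a ≤ φ b :=
  hφ.2.2.1 (Set.mem_Ici.mpr (by positivity)) (Set.mem_Ici.mpr (by positivity))
    (by exact_mod_cast h)

lemma phi_nat_subadd {φ : ℝ → ℝ} (hφ : IsGoodPhi φ) (a b : ℕ) :
    φ (a + b : ℕ) ≤ φ a + φ b := by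
  rcases Nat.eq_zero_or_pos (a + b) with h0 | hpos
  · obtain ⟨ha, hb⟩ : a = 0 ∧ b = 0 := by omega
    subst ha; subst hb
    simp [hφ.1]
  · have hab : (0 : ℝ) < (a : ℝ) + (b : ℝ) := by
      have : (0 : ℕ) < a + b := hpos
      exact_mod_cast this
    have hconc := hφ.2.2.2.1
    have key : ∀ c c' : ℕ, c + c' = a + b →
        ((c : ℝ) / ((a : ℝ) + b)) * φ (a + b : ℕ) ≤ φ c := by
      intro c c' hcc
      have h2 := hconc.2 (Set.mem_Ici.mpr (le_refl (0:ℝ)))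
        (Set.mem_Ici.mpr (by positivity : (0:ℝ) ≤ ((a:ℝ) + b)))
        (show (0:ℝ) ≤ (c' : ℝ) / ((a : ℝ) + (b : ℝ)) by positivity)
        (show (0:ℝ) ≤ (c : ℝ) / ((a : ℝ) + (b : ℝ)) by positivity)
        (by field_simp; exact_mod_cast (by omega : c' + c = a + b))
      rw [hφ.1] at h2
      simp only [smul_eq_mul, mul_zero, zero_add, smul_zero] at h2
      have harg : (c : ℝ) / ((a : ℝ) + b) * ((a : ℝ) + b) = (c : ℝ) := by field_simp
      rw [harg] at h2
      have hcast : ((a + b : ℕ) : ℝ) = (a : ℝ) + b := by push_cast; ring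
      rw [hcast]
      exact h2
    have k1 := key a b rfl
    have k2 := key b a (by omega)
    have hcast : ((a + b : ℕ) : ℝ) = (a : ℝ) + b := by push_cast; ring
    rw [hcast] at k1 k2 ⊢
    have hsum : ((a : ℝ) / ((a : ℝ) + b)) * φ ((a : ℝ) + b)
        + ((b : ℝ) / ((a : ℝ) + b)) * φ ((a : ℝ) + b) = φ ((a : ℝ) + b) := by
      field_simp
    linarith

/-! ### The deterministic path functional `phiSum` -/

/-- The path potential of a deterministic walk `w` up to time `n`, as a finite sum. -/
def phiSum (φ : ℝ → ℝ) (w : ℕ → Fin d → ℤ) (n : ℕ) : ℝ :=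
  ∑ z ∈ (Finset.Icc 1 n).image w, φ (((Finset.Icc 1 n).filter (fun m => w m = z)).card)

lemma phiSum_nonneg {φ : ℝ → ℝ} (hφ : IsGoodPhi φ) (w : ℕ → Fin d → ℤ) (n : ℕ) :
    0 ≤ phiSum φ w n :=
  Finset.sum_nonneg fun _ _ => phi_nat_nonneg hφ _

lemma phiSum_congr {φ : ℝ → ℝ} {w w' : ℕ → Fin d → ℤ} {n : ℕ}
    (h : ∀ k, 1 ≤ k → k ≤ n → w k = w' k) : phiSum φ w n = phiSum φ w' n := by
  unfold phiSum
  have hw : ∀ m ∈ Finset.Icc 1 n, w m = w' m := by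
    intro m hm; rw [Finset.mem_Icc] at hm; exact h m hm.1 hm.2
  have himg : (Finset.Icc 1 n).image w = (Finset.Icc 1 n).image w' :=
    Finset.image_congr fun m hm => hw m hm
  rw [himg]
  refine Finset.sum_congr rfl fun z _ => ?_
  have : Finset.filter (fun m => w m = z) (Finset.Icc 1 n)
      = Finset.filter (fun m => w' m = z) (Finset.Icc 1 n) :=
    Finset.filter_congr fun m hm => by rw [hw m hm]
  rw [this]

lemma annPotential_eq {φ : ℝ → ℝ} (hφ : IsGoodPhi φ) (S : ℕ → Ω → Fin d → ℤ) (n : ℕ) (ω : Ω) :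
    annPotential φ S n ω = phiSum φ (fun k => S k ω) n := by
  unfold annPotential phiSum localTime
  refine tsum_eq_sum fun z hz => ?_
  have : ((Finset.Icc 1 n).filter (fun m => S m ω = z)) = ∅ := by
    refine Finset.filter_eq_empty_iff.2 fun m hm hEq => hz ?_
    exact Finset.mem_image.2 ⟨m, hm, hEq⟩
  rw [this]
  simpa using hφ.1

lemma phiSum_mono {φ : ℝ → ℝ} (hφ : IsGoodPhi φ) (w : ℕ → Fin d → ℤ) {n n' : ℕ} (h : n ≤ n') :
    phiSum φ w n ≤ phiSum φ w n' := by
  unfold phiSum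
  have hsub : Finset.Icc 1 n ⊆ Finset.Icc 1 n' := Finset.Icc_subset_Icc_right h
  calc ∑ z ∈ (Finset.Icc 1 n).image w, φ (((Finset.Icc 1 n).filter (fun m => w m = z)).card)
      ≤ ∑ z ∈ (Finset.Icc 1 n).image w, φ (((Finset.Icc 1 n').filter (fun m => w m = z)).card) := by
        refine Finset.sum_le_sum fun z _ => phi_nat_mono hφ ?_
        exact Finset.card_le_card (Finset.monotone_filter_left _ hsub)
    _ ≤ ∑ z ∈ (Finset.Icc 1 n').image w, φ (((Finset.Icc 1 n').filter (fun m => w m = z)).card) := by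
        refine Finset.sum_le_sum_of_subset_of_nonneg (Finset.image_subset_image hsub) ?_
        intro z _ _; exact phi_nat_nonneg hφ _

end Subadd
section Subadd2
set_option linter.unusedSectionVars false

variable {d : ℕ} {Ω : Type*} [MeasurableSpace Ω]

lemma phiSum_split {φ : ℝ → ℝ} (hφ : IsGoodPhi φ) (w : ℕ → Fin d → ℤ) (n m : ℕ) :
    phiSum φ w (n + m) ≤ phiSum φ w n + phiSum φ (fun k => w (n + k) - w n) m := by
  classical
  set W : ℕ → Fin d → ℤ := fun k => w (n + k) - w n with hW
  have hcount : ∀ z : Fin d → ℤ,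
      ((Finset.Icc 1 (n + m)).filter (fun j => w j = z)).card
        = ((Finset.Icc 1 n).filter (fun j => w j = z)).card
          + ((Finset.Icc 1 m).filter (fun k => W k = z - w n)).card := by
    intro z
    have hsplit : (Finset.Icc 1 (n + m)).filter (fun j => w j = z)
        = ((Finset.Icc 1 n).filter (fun j => w j = z))
          ∪ ((Finset.Icc (n + 1) (n + m)).filter (fun j => w j = z)) := by
      rw [← Finset.filter_union]
      congr 1
      ext j
      simp only [Finset.mem_union, Finset.mem_Icc]
      omega
    have hdisj : Disjoint ((Finset.Icc 1 n).filter (fun j => w j = z))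
        ((Finset.Icc (n + 1) (n + m)).filter (fun j => w j = z)) := by
      rw [Finset.disjoint_left]
      intro j hj1 hj2
      simp only [Finset.mem_filter, Finset.mem_Icc] at hj1 hj2
      omega
    rw [hsplit, Finset.card_union_of_disjoint hdisj]
    congr 1
    refine Finset.card_bij' (fun j _ => j - n) (fun k _ => n + k) ?_ ?_ ?_ ?_
    · intro j hj
      simp only [Finset.mem_filter, Finset.mem_Icc] at hj ⊢
      refine ⟨by omega, ?_⟩
      have hjn : n + (j - n) = j := by omega
      simp only [hW, hjn, hj.2]
    · intro k hk
      simp only [Finset.mem_filter, Finset.mem_Icc] at hk ⊢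
      refine ⟨by omega, ?_⟩
      have := hk.2
      simp only [hW] at this
      have h2 : w (n + k) - w n + w n = z - w n + w n := by rw [this]
      simpa using h2
    · intro j hj; simp only [Finset.mem_filter, Finset.mem_Icc] at hj; omega
    · intro k hk; simp only [Finset.mem_filter, Finset.mem_Icc] at hk; omega
  have hsub : Finset.Icc 1 n ⊆ Finset.Icc 1 (n + m) :=
    Finset.Icc_subset_Icc_right (by omega)
  calc phiSum φ w (n + m)
      ≤ ∑ z ∈ (Finset.Icc 1 (n + m)).image w,
          (φ (((Finset.Icc 1 n).filter (fun j => w j = z)).card)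
            + φ (((Finset.Icc 1 m).filter (fun k => W k = z - w n)).card)) := by
        unfold phiSum
        refine Finset.sum_le_sum fun z _ => ?_
        rw [hcount z]
        exact phi_nat_subadd hφ _ _
    _ = (∑ z ∈ (Finset.Icc 1 (n + m)).image w,
          φ (((Finset.Icc 1 n).filter (fun j => w j = z)).card))
        + ∑ z ∈ (Finset.Icc 1 (n + m)).image w,
          φ (((Finset.Icc 1 m).filter (fun k => W k = z - w n)).card) :=
        Finset.sum_add_distrib
    _ = phiSum φ w n + phiSum φ W m := by
        congr 1
        · unfold phiSum
          refine (Finset.sum_subset (Finset.image_subset_image hsub) ?_).symm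
          intro z _ hz
          have : (Finset.Icc 1 n).filter (fun j => w j = z) = ∅ := by
            refine Finset.filter_eq_empty_iff.2 fun j hj hEq => hz ?_
            exact Finset.mem_image.2 ⟨j, hj, hEq⟩
          rw [this]
          simpa using hφ.1
        · have hinj : ∀ z ∈ (Finset.Icc 1 (n + m)).image w,
              ∀ z' ∈ (Finset.Icc 1 (n + m)).image w, z - w n = z' - w n → z = z' := by
            intro z _ z' _ h
            have := congrArg (· + w n) h
            simpa using this
          rw [← Finset.sum_image (g := fun z => z - w n)
            (f := fun z' => φ (((Finset.Icc 1 m).filter (fun k => W k = z')).card)) hinj]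
          unfold phiSum
          refine (Finset.sum_subset ?_ ?_).symm
          · intro z' hz'
            rcases Finset.mem_image.1 hz' with ⟨k, hk, hkeq⟩
            refine Finset.mem_image.2 ⟨w (n + k), ?_, ?_⟩
            · refine Finset.mem_image.2 ⟨n + k, ?_, rfl⟩
              simp only [Finset.mem_Icc] at hk ⊢
              omega
            · rw [← hkeq]
          · intro z' _ hz'
            have : (Finset.Icc 1 m).filter (fun k => W k = z') = ∅ := by
              refine Finset.filter_eq_empty_iff.2 fun k hk hEq => hz' ?_
              exact Finset.mem_image.2 ⟨k, hk, hEq⟩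
            rw [this]
            simpa using hφ.1

/-! ### First-visit events -/

/-- `w` visits `x` for the first time at time `n`. -/
def fvisit (w : ℕ → Fin d → ℤ) (x : Fin d → ℤ) (n : ℕ) : Prop :=
  w n = x ∧ ∀ k < n, w k ≠ x

lemma fvisit_unique {w : ℕ → Fin d → ℤ} {x : Fin d → ℤ} {n n' : ℕ}
    (h : fvisit w x n) (h' : fvisit w x n') : n = n' := by
  rcases lt_trichotomy n n' with hlt | he | hlt
  · exact absurd h.1 (h'.2 n hlt)
  · exact he
  · exact absurd h'.1 (h.2 n' hlt)

lemma fvisit_congr {w w' : ℕ → Fin d → ℤ} {x : Fin d → ℤ} {n : ℕ}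
    (h : ∀ k ≤ n, w k = w' k) : fvisit w x n ↔ fvisit w' x n := by
  unfold fvisit
  constructor
  · rintro ⟨h1, h2⟩
    exact ⟨by rw [← h n le_rfl]; exact h1, fun k hk => by rw [← h k (le_of_lt hk)]; exact h2 k hk⟩
  · rintro ⟨h1, h2⟩
    exact ⟨by rw [h n le_rfl]; exact h1, fun k hk => by rw [h k (le_of_lt hk)]; exact h2 k hk⟩

lemma fvisit_hitTime {S : ℕ → Ω → Fin d → ℤ} {x : Fin d → ℤ} {n : ℕ} {ω : Ω}
    (h : fvisit (fun k => S k ω) x n) : hitTime S x ω = n := by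
  unfold hitTime
  have hne : n ∈ {k : ℕ | S k ω = x} := h.1
  refine le_antisymm (Nat.sInf_le hne) ?_
  by_contra hlt
  push_neg at hlt
  have hmem := Nat.sInf_mem (⟨n, hne⟩ : {k : ℕ | S k ω = x}.Nonempty)
  exact h.2 _ hlt hmem

/-- The event that the walk first visits `x` at time `n`. -/
def fvEvt (S : ℕ → Ω → Fin d → ℤ) (x : Fin d → ℤ) (n : ℕ) : Set Ω :=
  {ω | fvisit (fun k => S k ω) x n}

lemma measurableSet_fvisitSet {W : ℕ → Ω → Fin d → ℤ} (hW : ∀ k, Measurable (W k))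
    (x : Fin d → ℤ) (n : ℕ) :
    MeasurableSet {ω | fvisit (fun k => W k ω) x n} := by
  have : {ω | fvisit (fun k => W k ω) x n}
      = (W n ⁻¹' {x}) ∩ ⋂ k ∈ Finset.range n, (W k ⁻¹' {x})ᶜ := by
    ext ω
    simp [fvisit, Set.mem_iInter, Finset.mem_range]
  rw [this]
  exact ((hW n) (measurableSet_singleton x)).inter
    (MeasurableSet.biInter (Set.to_countable _)
      fun k _ => ((hW k) (measurableSet_singleton x)).compl)

lemma fvEvt_disjoint (S : ℕ → Ω → Fin d → ℤ) (x : Fin d → ℤ) :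
    Pairwise (Function.onFun Disjoint (fvEvt S x)) := by
  intro n n' hne
  rw [Function.onFun, Set.disjoint_left]
  intro ω h h'
  have h1 : fvisit (fun k => S k ω) x n := h
  have h2 : fvisit (fun k => S k ω) x n' := h'
  exact hne (fvisit_unique h1 h2)

lemma hits_eq_iUnion (S : ℕ → Ω → Fin d → ℤ) (x : Fin d → ℤ) :
    hits S x = ⋃ n, fvEvt S x n := by
  ext ω
  constructor
  · rintro ⟨k, hk⟩
    have hne : {j : ℕ | S j ω = x}.Nonempty := ⟨k, hk⟩
    refine Set.mem_iUnion.2 ⟨sInf {j : ℕ | S j ω = x}, ?_, ?_⟩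
    · exact Nat.sInf_mem hne
    · intro j hj
      exact Nat.notMem_of_lt_sInf hj
  · intro h
    rcases Set.mem_iUnion.1 h with ⟨n, hn⟩
    exact ⟨n, hn.1⟩

end Subadd2
section Subadd3
set_option linter.unusedSectionVars false

variable {d : ℕ} {Ω : Type*} [MeasurableSpace Ω]

/-- Composition with a measurable `ℕ`-valued function. -/
lemma measurable_nat_comp {H : Ω → ℕ} (hH : Measurable H) {F : ℕ → Ω → ℝ}
    (hF : ∀ n, Measurable (F n)) : Measurable fun ω => F (H ω) ω := by
  intro t ht
  have : (fun ω => F (H ω) ω) ⁻¹' t = ⋃ n, (H ⁻¹' {n}) ∩ ((F n) ⁻¹' t) := by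
    ext ω
    simp only [Set.mem_preimage, Set.mem_iUnion, Set.mem_inter_iff, Set.mem_singleton_iff]
    constructor
    · intro h; exact ⟨H ω, rfl, h⟩
    · rintro ⟨n, rfl, h⟩; exact h
  rw [this]
  exact MeasurableSet.iUnion fun n => (hH (measurableSet_singleton n)).inter (hF n ht)

lemma measurable_discrete_comp₂ {f g : Ω → Fin d → ℤ} (hf : Measurable f) (hg : Measurable g)
    (F : (Fin d → ℤ) → (Fin d → ℤ) → ℝ) : Measurable fun ω => F (f ω) (g ω) :=
  (measurable_of_countable (fun p : (Fin d → ℤ) × (Fin d → ℤ) => F p.1 p.2)).comp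
    (hf.prodMk hg)

lemma measurable_sub_walk {f g : Ω → Fin d → ℤ} (hf : Measurable f) (hg : Measurable g) :
    Measurable fun ω => f ω - g ω :=
  (measurable_of_countable (fun p : (Fin d → ℤ) × (Fin d → ℤ) => p.1 - p.2)).comp
    (hf.prodMk hg)

lemma measurable_hitTime {S : ℕ → Ω → Fin d → ℤ} (hm : ∀ n, Measurable (S n))
    (x : Fin d → ℤ) : Measurable (hitTime S x) := by
  refine measurable_to_countable' fun n => ?_
  have : {ω | hitTime S x ω = n}
      = {ω | fvisit (fun k => S k ω) x n} ∪ ({ω | n = 0} ∩ ⋂ k, (S k ⁻¹' {x})ᶜ) := by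
    ext ω
    simp only [Set.mem_setOf_eq, Set.mem_union, Set.mem_inter_iff, Set.mem_iInter,
      Set.mem_compl_iff, Set.mem_preimage, Set.mem_singleton_iff]
    constructor
    · intro h
      by_cases hne : ∃ k, S k ω = x
      · left
        have hne' : {k : ℕ | S k ω = x}.Nonempty := hne
        refine ⟨?_, ?_⟩
        · rw [← h]; exact Nat.sInf_mem hne'
        · intro k hk
          rw [← h] at hk
          exact Nat.notMem_of_lt_sInf hk
      · right
        push_neg at hne
        have : {k : ℕ | S k ω = x} = ∅ := by
          ext k; simp [hne k]
        refine ⟨?_, hne⟩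
        rw [← h]
        unfold hitTime
        rw [this]
        exact Nat.sInf_empty
    · rintro (h | ⟨h0, hnever⟩)
      · exact fvisit_hitTime h
      · have : {k : ℕ | S k ω = x} = ∅ := by
          ext k; simp [hnever k]
        unfold hitTime
        rw [this, Nat.sInf_empty, h0]
  show MeasurableSet {ω | hitTime S x ω = n}
  rw [this]
  refine (measurableSet_fvisitSet hm x n).union (MeasurableSet.inter ?_ ?_)
  · by_cases h : n = 0
    · simp only [h, Set.setOf_true]; exact MeasurableSet.univ
    · simp only [h, Set.setOf_false]; exact MeasurableSet.empty
  · exact MeasurableSet.iInter fun k => ((hm k) (measurableSet_singleton x)).compl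

lemma measurable_phiSum_walk {φ : ℝ → ℝ} {W : ℕ → Ω → Fin d → ℤ}
    (hm : ∀ n, Measurable (W n)) (n : ℕ) :
    Measurable fun ω => phiSum φ (fun k => W k ω) n := by
  have heq : (fun ω => phiSum φ (fun k => W k ω) n)
      = (fun v : Fin (n + 1) → Fin d → ℤ =>
          phiSum φ (fun k => if h : k < n + 1 then v ⟨k, h⟩ else 0) n)
        ∘ (fun ω (i : Fin (n + 1)) => W i ω) := by
    funext ω
    simp only [Function.comp_apply]
    refine phiSum_congr fun k h1 h2 => ?_
    rw [dif_pos (by omega : k < n + 1)]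
  rw [heq]
  exact (measurable_of_countable _).comp (measurable_pi_lambda _ fun i => hm i)

/-! ### The increments and block laws -/

/-- The increments of the walk. -/
def Xinc (S : ℕ → Ω → Fin d → ℤ) (n : ℕ) (ω : Ω) : Fin d → ℤ := S (n + 1) ω - S n ω

lemma measurable_Xinc {S : ℕ → Ω → Fin d → ℤ} (hm : ∀ n, Measurable (S n)) (n : ℕ) :
    Measurable (Xinc S n) := measurable_sub_walk (hm (n + 1)) (hm n)

lemma S_eq_sum {P : Measure Ω} {S : ℕ → Ω → Fin d → ℤ} (hS : IsSRW P S) (n : ℕ) (ω : Ω) :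
    S n ω = ∑ j ∈ Finset.range n, Xinc S j ω := by
  have : ∑ j ∈ Finset.range n, Xinc S j ω = S n ω - S 0 ω :=
    Finset.sum_range_sub (fun j => S j ω) n
  rw [this, hS.1 ω, sub_zero]

/-- The block of `m` increments starting at time `a`. -/
def blockT (S : ℕ → Ω → Fin d → ℤ) (a m : ℕ) (ω : Ω) : Fin m → Fin d → ℤ :=
  fun i => Xinc S (a + i) ω

lemma measurable_blockT {S : ℕ → Ω → Fin d → ℤ} (hm : ∀ n, Measurable (S n)) (a m : ℕ) :
    Measurable (blockT S a m) :=
  measurable_pi_lambda _ fun i => measurable_Xinc hm (a + i)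

lemma stepDist_prob {P : Measure Ω} [IsProbabilityMeasure P] {S : ℕ → Ω → Fin d → ℤ}
    (hS : IsSRW P S) : IsProbabilityMeasure (stepDist d) := by
  rw [← hS.2.2.1 0]
  exact Measure.isProbabilityMeasure_map (measurable_Xinc hS.2.1 0).aemeasurable

lemma Xinc_law {P : Measure Ω} {S : ℕ → Ω → Fin d → ℤ} (hS : IsSRW P S) (j : ℕ)
    (t : Set (Fin d → ℤ)) : P (Xinc S j ⁻¹' t) = stepDist d t := by
  have hmap : Measure.map (Xinc S j) P = stepDist d := hS.2.2.1 j
  rw [← hmap, Measure.map_apply (measurable_Xinc hS.2.1 j) (Set.to_countable t).measurableSet]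

lemma blockLaw {P : Measure Ω} [IsProbabilityMeasure P] {S : ℕ → Ω → Fin d → ℤ}
    (hS : IsSRW P S) (a m : ℕ) :
    Measure.map (blockT S a m) P = Measure.pi (fun _ : Fin m => stepDist d) := by
  classical
  haveI := stepDist_prob hS
  have hind : iIndepFun (Xinc S) P := hS.2.2.2
  refine Measure.ext_of_singleton fun v => ?_
  rw [Measure.map_apply (measurable_blockT hS.2.1 a m) (measurableSet_singleton v)]
  set sets : ℕ → Set (Fin d → ℤ) :=
    fun j => {w | ∀ i : Fin m, a + (i : ℕ) = j → w = v i} with hsets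
  set s : Finset ℕ := Finset.univ.image (fun i : Fin m => a + (i : ℕ)) with hs
  have hpre : blockT S a m ⁻¹' {v} = ⋂ j ∈ s, Xinc S j ⁻¹' sets j := by
    ext ω
    simp only [Set.mem_preimage, Set.mem_singleton_iff, Set.mem_iInter, hsets, hs,
      Set.mem_setOf_eq, Finset.mem_image, Finset.mem_univ, true_and]
    constructor
    · intro h j hj i hij
      rw [← hij]
      have : blockT S a m ω i = v i := by rw [h]
      exact this
    · intro h
      funext i
      exact h (a + i) ⟨i, rfl⟩ i rfl
  have hsets_eval : ∀ i : Fin m, sets (a + (i : ℕ)) = {v i} := by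
    intro i
    ext w
    simp only [hsets, Set.mem_setOf_eq, Set.mem_singleton_iff]
    constructor
    · intro h; exact h i rfl
    · intro h i' hi'
      have h2 : (i' : ℕ) = (i : ℕ) := by omega
      have h3 : i' = i := Fin.ext h2
      rw [h3]; exact h
  rw [hpre]
  rw [hind.measure_inter_preimage_eq_mul s
    (fun j _ => (Set.to_countable (sets j)).measurableSet)]
  have hinj : ∀ i ∈ (Finset.univ : Finset (Fin m)), ∀ i' ∈ (Finset.univ : Finset (Fin m)),
      a + (i : ℕ) = a + (i' : ℕ) → i = i' := by
    intro i _ i' _ h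
    exact Fin.ext (by omega)
  rw [hs, Finset.prod_image hinj]
  have hterm : ∀ i ∈ (Finset.univ : Finset (Fin m)),
      P (Xinc S (a + (i : ℕ)) ⁻¹' sets (a + (i : ℕ))) = stepDist d {v i} := by
    intro i _
    rw [Xinc_law hS, hsets_eval i]
  rw [Finset.prod_congr rfl hterm]
  rw [← Set.univ_pi_singleton v, Measure.pi_pi]

end Subadd3
section Subadd4
set_option linter.unusedSectionVars false

variable {d : ℕ} {Ω : Type*} [MeasurableSpace Ω]

lemma indep_blocks {P : Measure Ω} {S : ℕ → Ω → Fin d → ℤ} (hS : IsSRW P S) (n m : ℕ) :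
    IndepFun (blockT S 0 n) (blockT S n m) P := by
  classical
  have hind : iIndepFun (Xinc S) P := hS.2.2.2
  have hdisj : Disjoint (Finset.range n) (Finset.Ico n (n + m)) := by
    rw [Finset.disjoint_left]
    intro j hj1 hj2
    simp only [Finset.mem_range] at hj1
    simp only [Finset.mem_Ico] at hj2
    omega
  have hbase := hind.indepFun_finset (Finset.range n) (Finset.Ico n (n + m)) hdisj
    (measurable_Xinc hS.2.1)
  have h1 : blockT S 0 n = (fun u : ((Finset.range n : Finset ℕ) : Type) → Fin d → ℤ =>
      fun i : Fin n => u ⟨(i : ℕ), Finset.mem_range.2 i.2⟩)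
      ∘ (fun ω (j : (Finset.range n : Finset ℕ)) => Xinc S (j : ℕ) ω) := by
    funext ω i
    simp [blockT]
  have h2 : blockT S n m = (fun u : ((Finset.Ico n (n + m) : Finset ℕ) : Type) → Fin d → ℤ =>
      fun i : Fin m => u ⟨n + (i : ℕ), Finset.mem_Ico.2 ⟨by omega, by omega⟩⟩)
      ∘ (fun ω (j : (Finset.Ico n (n + m) : Finset ℕ)) => Xinc S (j : ℕ) ω) := by
    funext ω i
    simp [blockT]
  rw [h1, h2]
  exact hbase.comp (measurable_of_countable _) (measurable_of_countable _)

/-! ### Reconstruction of the walk from a block of increments -/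

/-- Rebuild a walk path from a finite tuple of increments. -/
def wrec {m : ℕ} (v : Fin m → Fin d → ℤ) (k : ℕ) : Fin d → ℤ :=
  ∑ j ∈ Finset.range k, (if h : j < m then v ⟨j, h⟩ else 0)

lemma wrec_blockT {P : Measure Ω} {S : ℕ → Ω → Fin d → ℤ} (hS : IsSRW P S) (a m : ℕ) (ω : Ω)
    {k : ℕ} (hk : k ≤ m) : wrec (blockT S a m ω) k = S (a + k) ω - S a ω := by
  unfold wrec
  have h1 : ∀ j ∈ Finset.range k,
      (if h : j < m then blockT S a m ω ⟨j, h⟩ else 0) = S (a + j + 1) ω - S (a + j) ω := by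
    intro j hj
    rw [Finset.mem_range] at hj
    rw [dif_pos (by omega : j < m)]
    rfl
  rw [Finset.sum_congr rfl h1]
  have h2 : ∀ j ∈ Finset.range k,
      S (a + j + 1) ω - S (a + j) ω
        = (fun i => S (a + i) ω) (j + 1) - (fun i => S (a + i) ω) j := by
    intro j _
    have hj : a + j + 1 = a + (j + 1) := by omega
    rw [hj]
  rw [Finset.sum_congr rfl h2, Finset.sum_range_sub (fun i => S (a + i) ω) k]
  simp

/-- The functional computing the first-visit indicator weighted by the potential,
from a tuple of increments. -/
def FF (φ : ℝ → ℝ) (x : Fin d → ℤ) (m : ℕ) : (Fin m → Fin d → ℤ) → ℝ :=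
  Set.indicator {u : Fin m → Fin d → ℤ | fvisit (wrec u) x m}
    (fun u => Real.exp (-(phiSum φ (wrec u) m)))

lemma FF_blockT {P : Measure Ω} {S : ℕ → Ω → Fin d → ℤ} (hS : IsSRW P S)
    (φ : ℝ → ℝ) (x : Fin d → ℤ) (a m : ℕ) (ω : Ω) :
    FF φ x m (blockT S a m ω)
      = Set.indicator {ω' | fvisit (fun k => S (a + k) ω' - S a ω') x m}
          (fun ω' => Real.exp (-(phiSum φ (fun k => S (a + k) ω' - S a ω') m))) ω := by
  have hcong : ∀ k ≤ m, wrec (blockT S a m ω) k = S (a + k) ω - S a ω :=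
    fun k hk => wrec_blockT hS a m ω hk
  have hmem : fvisit (wrec (blockT S a m ω)) x m
      ↔ fvisit (fun k => S (a + k) ω - S a ω) x m :=
    fvisit_congr hcong
  have hval : phiSum φ (wrec (blockT S a m ω)) m
      = phiSum φ (fun k => S (a + k) ω - S a ω) m :=
    phiSum_congr fun k h1 h2 => hcong k h2
  unfold FF
  by_cases h : fvisit (fun k => S (a + k) ω - S a ω) x m
  · have hin : blockT S a m ω ∈ {u : Fin m → Fin d → ℤ | fvisit (wrec u) x m} := hmem.2 h
    have hin' : ω ∈ {ω' | fvisit (fun k => S (a + k) ω' - S a ω') x m} := h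
    rw [Set.indicator_of_mem hin, Set.indicator_of_mem hin', hval]
  · have hin : blockT S a m ω ∉ {u : Fin m → Fin d → ℤ | fvisit (wrec u) x m} :=
      fun hc => h (hmem.1 hc)
    have hin' : ω ∉ {ω' | fvisit (fun k => S (a + k) ω' - S a ω') x m} := h
    rw [Set.indicator_of_notMem hin, Set.indicator_of_notMem hin']

lemma FF_blockT_zero {P : Measure Ω} {S : ℕ → Ω → Fin d → ℤ} (hS : IsSRW P S)
    (φ : ℝ → ℝ) (x : Fin d → ℤ) (m : ℕ) (ω : Ω) :
    FF φ x m (blockT S 0 m ω)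
      = Set.indicator (fvEvt S x m)
          (fun ω' => Real.exp (-(phiSum φ (fun k => S k ω') m))) ω := by
  rw [FF_blockT hS]
  have hwalk : ∀ ω' : Ω, ∀ k, S (0 + k) ω' - S 0 ω' = S k ω' := by
    intro ω' k
    rw [hS.1 ω', sub_zero, zero_add]
  have hmem : ∀ ω' : Ω, fvisit (fun k => S (0 + k) ω' - S 0 ω') x m
      ↔ fvisit (fun k => S k ω') x m :=
    fun ω' => fvisit_congr fun k _ => hwalk ω' k
  have hval : ∀ ω' : Ω, phiSum φ (fun k => S (0 + k) ω' - S 0 ω') m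
      = phiSum φ (fun k => S k ω') m :=
    fun ω' => phiSum_congr fun k _ _ => hwalk ω' k
  by_cases h : fvisit (fun k => S k ω) x m
  · have hin : ω ∈ {ω' | fvisit (fun k => S (0 + k) ω' - S 0 ω') x m} := (hmem ω).2 h
    have hin' : ω ∈ fvEvt S x m := h
    rw [Set.indicator_of_mem hin, Set.indicator_of_mem hin', hval]
  · have hin : ω ∉ {ω' | fvisit (fun k => S (0 + k) ω' - S 0 ω') x m} :=
      fun hc => h ((hmem ω).1 hc)
    have hin' : ω ∉ fvEvt S x m := h
    rw [Set.indicator_of_notMem hin, Set.indicator_of_notMem hin']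

lemma integral_FF_blockT {P : Measure Ω} [IsProbabilityMeasure P] {S : ℕ → Ω → Fin d → ℤ}
    (hS : IsSRW P S) (φ : ℝ → ℝ) (x : Fin d → ℤ) (a m : ℕ) :
    ∫ ω, FF φ x m (blockT S a m ω) ∂P = ∫ ω, FF φ x m (blockT S 0 m ω) ∂P := by
  have h1 : ∫ ω, FF φ x m (blockT S a m ω) ∂P
      = ∫ v, FF φ x m v ∂(Measure.map (blockT S a m) P) := by
    rw [integral_map (measurable_blockT hS.2.1 a m).aemeasurable
      (measurable_of_countable _).aestronglyMeasurable]
  have h2 : ∫ ω, FF φ x m (blockT S 0 m ω) ∂P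
      = ∫ v, FF φ x m v ∂(Measure.map (blockT S 0 m) P) := by
    rw [integral_map (measurable_blockT hS.2.1 0 m).aemeasurable
      (measurable_of_countable _).aestronglyMeasurable]
  rw [h1, h2, blockLaw hS a m, blockLaw hS 0 m]

end Subadd4
section Subadd5
set_option linter.unusedSectionVars false
set_option linter.unusedVariables false

variable {d : ℕ} {Ω : Type*} [MeasurableSpace Ω]

/-- The integrand of the annealed two-point function. -/
def gfun (φ : ℝ → ℝ) (S : ℕ → Ω → Fin d → ℤ) (lam : ℝ) (x : Fin d → ℤ) (ω : Ω) : ℝ :=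
  Real.exp (-(lam * (hitTime S x ω : ℝ)) - annPotential φ S (hitTime S x ω) ω)

/-- The value whose negative logarithm is `twoPointB`. -/
def Ival (P : Measure Ω) (φ : ℝ → ℝ) (S : ℕ → Ω → Fin d → ℤ) (lam : ℝ) (x : Fin d → ℤ) : ℝ :=
  ∫ ω, Set.indicator (hits S x) (gfun φ S lam x) ω ∂P

lemma twoPointB_eq (P : Measure Ω) (φ : ℝ → ℝ) (S : ℕ → Ω → Fin d → ℤ) (lam : ℝ)
    (x : Fin d → ℤ) : twoPointB P φ S lam x = -Real.log (Ival P φ S lam x) := rfl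

variable {P : Measure Ω} [IsProbabilityMeasure P] {S : ℕ → Ω → Fin d → ℤ} {φ : ℝ → ℝ}
  {lam : ℝ}

lemma gfun_eq (hφ : IsGoodPhi φ) (x : Fin d → ℤ) (ω : Ω) :
    gfun φ S lam x ω = Real.exp (-(lam * (hitTime S x ω : ℝ))
      - phiSum φ (fun k => S k ω) (hitTime S x ω)) := by
  unfold gfun
  rw [annPotential_eq hφ]

lemma measurable_gfun (hS : IsSRW P S) (hφ : IsGoodPhi φ) (x : Fin d → ℤ) :
    Measurable (gfun φ S lam x) := by
  have heq : gfun φ S lam x = fun ω =>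
      (fun (n : ℕ) (ω' : Ω) => Real.exp (-(lam * (n : ℝ)) - phiSum φ (fun k => S k ω') n))
        (hitTime S x ω) ω := by
    funext ω
    rw [gfun_eq hφ]
  rw [heq]
  exact measurable_nat_comp (measurable_hitTime hS.2.1 x)
    (F := fun (n : ℕ) (ω' : Ω) => Real.exp (-(lam * (n : ℝ)) - phiSum φ (fun k => S k ω') n))
    (fun n => (Measurable.sub measurable_const (measurable_phiSum_walk hS.2.1 n)).exp)

lemma gfun_nonneg (x : Fin d → ℤ) (ω : Ω) : 0 ≤ gfun φ S lam x ω := (Real.exp_pos _).le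

lemma gfun_le_one (hφ : IsGoodPhi φ) (hlam : 0 ≤ lam) (x : Fin d → ℤ) (ω : Ω) :
    gfun φ S lam x ω ≤ 1 := by
  rw [gfun_eq hφ]
  rw [Real.exp_le_one_iff]
  have h1 : 0 ≤ lam * (hitTime S x ω : ℝ) := by positivity
  have h2 : 0 ≤ phiSum φ (fun k => S k ω) (hitTime S x ω) := phiSum_nonneg hφ _ _
  linarith

lemma integrable_gfun (hS : IsSRW P S) (hφ : IsGoodPhi φ) (hlam : 0 ≤ lam) (x : Fin d → ℤ) :
    Integrable (gfun φ S lam x) P := by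
  refine (integrable_const (1 : ℝ)).mono' (measurable_gfun hS hφ x).aestronglyMeasurable ?_
  filter_upwards with ω
  rw [Real.norm_of_nonneg (gfun_nonneg x ω)]
  exact gfun_le_one hφ hlam x ω

lemma measurableSet_hits (hS : IsSRW P S) (x : Fin d → ℤ) : MeasurableSet (hits S x) := by
  rw [hits_eq_iUnion]
  exact MeasurableSet.iUnion fun n => measurableSet_fvisitSet hS.2.1 x n

/-- The weight of the event that the walk first visits `x` at time `n`. -/
def aCoef (P : Measure Ω) (φ : ℝ → ℝ) (S : ℕ → Ω → Fin d → ℤ) (x : Fin d → ℤ) (n : ℕ) : ℝ :=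
  ∫ ω in fvEvt S x n, Real.exp (-(phiSum φ (fun k => S k ω) n)) ∂P

lemma aCoef_nonneg (hS : IsSRW P S) (x : Fin d → ℤ) (n : ℕ) : 0 ≤ aCoef P φ S x n :=
  setIntegral_nonneg (measurableSet_fvisitSet hS.2.1 x n) (fun ω _ => (Real.exp_pos _).le)

lemma hasSum_Ival (hS : IsSRW P S) (hφ : IsGoodPhi φ) (hlam : 0 ≤ lam) (x : Fin d → ℤ) :
    HasSum (fun (n : ℕ) => Real.exp (-(lam * (n : ℝ))) * aCoef P φ S x n)
      (Ival P φ S lam x) := by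
  have hIeq : Ival P φ S lam x = ∫ ω in ⋃ n, fvEvt S x n, gfun φ S lam x ω ∂P := by
    unfold Ival
    rw [integral_indicator (measurableSet_hits hS x), hits_eq_iUnion]
  have hsum := hasSum_integral_iUnion (μ := P) (f := gfun φ S lam x) (s := fvEvt S x)
    (fun n => measurableSet_fvisitSet hS.2.1 x n)
    (fvEvt_disjoint S x)
    ((integrable_gfun hS hφ hlam x).integrableOn)
  rw [← hIeq] at hsum
  have hterm : ∀ n, ∫ ω in fvEvt S x n, gfun φ S lam x ω ∂P
      = Real.exp (-(lam * (n : ℝ))) * aCoef P φ S x n := by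
    intro n
    have hcong : ∀ ω ∈ fvEvt S x n, gfun φ S lam x ω
        = Real.exp (-(lam * (n : ℝ))) * Real.exp (-(phiSum φ (fun k => S k ω) n)) := by
      intro ω hω
      have hH : hitTime S x ω = n := fvisit_hitTime hω
      rw [gfun_eq hφ, hH, sub_eq_add_neg, Real.exp_add]
    have h3 : MeasurableSet (fvEvt S x n) := measurableSet_fvisitSet hS.2.1 x n
    rw [setIntegral_congr_fun h3 hcong, MeasureTheory.integral_const_mul]
    rfl
  have heq : (fun n => ∫ ω in fvEvt S x n, gfun φ S lam x ω ∂P)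
      = fun (n : ℕ) => Real.exp (-(lam * (n : ℝ))) * aCoef P φ S x n := funext hterm
  rwa [heq] at hsum

end Subadd5
section Subadd6
set_option linter.unusedSectionVars false
set_option linter.unusedVariables false

variable {d : ℕ} {Ω : Type*} [MeasurableSpace Ω]
variable {P : Measure Ω} [IsProbabilityMeasure P] {S : ℕ → Ω → Fin d → ℤ} {φ : ℝ → ℝ}
  {lam : ℝ}

/-- The summand in the product decomposition. -/
def pterm (φ : ℝ → ℝ) (S : ℕ → Ω → Fin d → ℤ) (lam : ℝ) (x y : Fin d → ℤ) (p : ℕ × ℕ)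
    (ω : Ω) : ℝ :=
  Real.exp (-(lam * ((p.1 : ℝ) + (p.2 : ℝ))))
    * (FF φ x p.1 (blockT S 0 p.1 ω) * FF φ y p.2 (blockT S p.1 p.2 ω))

lemma FF_nonneg (φ : ℝ → ℝ) (hφ : IsGoodPhi φ) (x : Fin d → ℤ) (m : ℕ)
    (v : Fin m → Fin d → ℤ) : 0 ≤ FF φ x m v :=
  Set.indicator_nonneg (fun _ _ => (Real.exp_pos _).le) v

lemma FF_le_one (φ : ℝ → ℝ) (hφ : IsGoodPhi φ) (x : Fin d → ℤ) (m : ℕ)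
    (v : Fin m → Fin d → ℤ) : FF φ x m v ≤ 1 := by
  unfold FF
  by_cases h : v ∈ {u : Fin m → Fin d → ℤ | fvisit (wrec u) x m}
  · rw [Set.indicator_of_mem h]
    rw [Real.exp_le_one_iff]
    simp only [neg_nonpos]
    exact phiSum_nonneg hφ _ _
  · rw [Set.indicator_of_notMem h]
    norm_num

lemma pterm_nonneg (hφ : IsGoodPhi φ) (x y : Fin d → ℤ) (p : ℕ × ℕ) (ω : Ω) :
    0 ≤ pterm φ S lam x y p ω :=
  mul_nonneg (Real.exp_pos _).le
    (mul_nonneg (FF_nonneg φ hφ x _ _) (FF_nonneg φ hφ y _ _))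

lemma pterm_le_one (hφ : IsGoodPhi φ) (hlam : 0 ≤ lam) (x y : Fin d → ℤ) (p : ℕ × ℕ) (ω : Ω) :
    pterm φ S lam x y p ω ≤ 1 := by
  unfold pterm
  have h1 : Real.exp (-(lam * ((p.1 : ℝ) + (p.2 : ℝ)))) ≤ 1 := by
    rw [Real.exp_le_one_iff]
    have : (0 : ℝ) ≤ (p.1 : ℝ) + (p.2 : ℝ) := by positivity
    simp only [neg_nonpos]
    positivity
  calc Real.exp (-(lam * ((p.1 : ℝ) + (p.2 : ℝ))))
        * (FF φ x p.1 (blockT S 0 p.1 ω) * FF φ y p.2 (blockT S p.1 p.2 ω))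
      ≤ 1 * (1 * 1) :=
        mul_le_mul h1
          (mul_le_mul (FF_le_one φ hφ x _ _) (FF_le_one φ hφ y _ _)
            (FF_nonneg φ hφ y _ _) zero_le_one)
          (mul_nonneg (FF_nonneg φ hφ x _ _) (FF_nonneg φ hφ y _ _)) zero_le_one
    _ = 1 := by norm_num
  
lemma measurable_pterm (hS : IsSRW P S) (x y : Fin d → ℤ) (p : ℕ × ℕ) :
    Measurable (pterm φ S lam x y p) := by
  unfold pterm
  refine Measurable.const_mul (Measurable.mul ?_ ?_) _
  · exact (measurable_of_countable _).comp (measurable_blockT hS.2.1 0 p.1)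
  · exact (measurable_of_countable _).comp (measurable_blockT hS.2.1 p.1 p.2)

lemma integrable_pterm (hS : IsSRW P S) (hφ : IsGoodPhi φ) (hlam : 0 ≤ lam)
    (x y : Fin d → ℤ) (p : ℕ × ℕ) : Integrable (pterm φ S lam x y p) P := by
  refine (integrable_const (1 : ℝ)).mono'
    (measurable_pterm hS x y p).aestronglyMeasurable ?_
  filter_upwards with ω
  rw [Real.norm_of_nonneg (pterm_nonneg hφ x y p ω)]
  exact pterm_le_one hφ hlam x y p ω

lemma integral_pterm (hS : IsSRW P S) (hφ : IsGoodPhi φ) (x y : Fin d → ℤ) (p : ℕ × ℕ) :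
    ∫ ω, pterm φ S lam x y p ω ∂P
      = Real.exp (-(lam * ((p.1 : ℝ) + (p.2 : ℝ)))) * (aCoef P φ S x p.1 * aCoef P φ S y p.2) := by
  obtain ⟨n, m⟩ := p
  unfold pterm
  rw [MeasureTheory.integral_const_mul]
  congr 1
  have hX : Measurable (fun ω => FF φ x n (blockT S 0 n ω)) :=
    (measurable_of_countable _).comp (measurable_blockT hS.2.1 0 n)
  have hY : Measurable (fun ω => FF φ y m (blockT S n m ω)) :=
    (measurable_of_countable _).comp (measurable_blockT hS.2.1 n m)
  have hindep : IndepFun (fun ω => FF φ x n (blockT S 0 n ω))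
      (fun ω => FF φ y m (blockT S n m ω)) P :=
    (indep_blocks hS n m).comp (measurable_of_countable (FF φ x n))
      (measurable_of_countable (FF φ y m))
  have hmul := hindep.integral_mul_eq_mul_integral hX.aestronglyMeasurable hY.aestronglyMeasurable
  have hmul' : ∫ ω, FF φ x n (blockT S 0 n ω) * FF φ y m (blockT S n m ω) ∂P
      = (∫ ω, FF φ x n (blockT S 0 n ω) ∂P) * ∫ ω, FF φ y m (blockT S n m ω) ∂P := hmul
  rw [hmul']
  have key : ∀ (z : Fin d → ℤ) (mm : ℕ),
      ∫ ω, FF φ z mm (blockT S 0 mm ω) ∂P = aCoef P φ S z mm := by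
    intro z mm
    have hms : MeasurableSet (fvEvt S z mm) := measurableSet_fvisitSet hS.2.1 z mm
    have h10 : (fun ω => FF φ z mm (blockT S 0 mm ω))
        = Set.indicator (fvEvt S z mm)
            (fun ω' => Real.exp (-(phiSum φ (fun k => S k ω') mm))) :=
      funext (FF_blockT_zero hS φ z mm)
    calc ∫ ω, FF φ z mm (blockT S 0 mm ω) ∂P
        = ∫ ω, Set.indicator (fvEvt S z mm)
            (fun ω' => Real.exp (-(phiSum φ (fun k => S k ω') mm))) ω ∂P := by rw [h10]
      _ = ∫ ω in fvEvt S z mm, Real.exp (-(phiSum φ (fun k => S k ω) mm)) ∂P :=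
          integral_indicator hms
      _ = aCoef P φ S z mm := rfl
  congr 1
  · exact key x n
  · rw [integral_FF_blockT hS φ y n m]
    exact key y m

lemma pterm_sum_le (hS : IsSRW P S) (hφ : IsGoodPhi φ) (hlam : 0 ≤ lam) (x y : Fin d → ℤ)
    (u : Finset (ℕ × ℕ)) (ω : Ω) :
    ∑ p ∈ u, pterm φ S lam x y p ω
      ≤ Set.indicator (hits S (x + y)) (gfun φ S lam (x + y)) ω := by
  have hR0 : 0 ≤ Set.indicator (hits S (x + y)) (gfun φ S lam (x + y)) ω :=
    Set.indicator_nonneg (fun ω' _ => gfun_nonneg (x + y) ω') ω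
  -- rewrite pterm at ω via the event indicators
  have hrw : ∀ p : ℕ × ℕ, pterm φ S lam x y p ω
      = Real.exp (-(lam * ((p.1 : ℝ) + (p.2 : ℝ))))
        * (Set.indicator (fvEvt S x p.1)
            (fun ω' => Real.exp (-(phiSum φ (fun k => S k ω') p.1))) ω
          * Set.indicator {ω' | fvisit (fun k => S (p.1 + k) ω' - S p.1 ω') y p.2}
            (fun ω' => Real.exp (-(phiSum φ (fun k => S (p.1 + k) ω' - S p.1 ω') p.2))) ω) := by
    intro p
    unfold pterm
    rw [FF_blockT_zero hS φ x p.1 ω, FF_blockT hS φ y p.1 p.2 ω]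
  -- a nonzero term forces membership in both events
  have hmem : ∀ p : ℕ × ℕ, pterm φ S lam x y p ω ≠ 0 →
      fvisit (fun k => S k ω) x p.1
        ∧ fvisit (fun k => S (p.1 + k) ω - S p.1 ω) y p.2 := by
    intro p hne
    rw [hrw p] at hne
    by_contra hcon
    push_neg at hcon
    by_cases h1 : fvisit (fun k => S k ω) x p.1
    · have h2 := hcon h1
      have : ω ∉ {ω' | fvisit (fun k => S (p.1 + k) ω' - S p.1 ω') y p.2} := h2
      rw [Set.indicator_of_notMem this] at hne
      simp at hne
    · have : ω ∉ fvEvt S x p.1 := h1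
      rw [Set.indicator_of_notMem this] at hne
      simp at hne
  -- a nonzero term is bounded by the indicator
  have hbnd : ∀ p : ℕ × ℕ, pterm φ S lam x y p ω
      ≤ Set.indicator (hits S (x + y)) (gfun φ S lam (x + y)) ω := by
    intro p
    by_cases hne : pterm φ S lam x y p ω = 0
    · rw [hne]; exact hR0
    obtain ⟨hA, hB⟩ := hmem p hne
    obtain ⟨n, m⟩ := p
    -- the walk is at x + y at time n + m
    have hxy : S (n + m) ω = x + y := by
      have h1 : S n ω = x := hA.1
      have h2 : S (n + m) ω - S n ω = y := hB.1
      have h3 : S (n + m) ω = y + S n ω := by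
        rw [← h2]; abel
      rw [h3, h1]; abel
    have hhit : ω ∈ hits S (x + y) := ⟨n + m, hxy⟩
    rw [Set.indicator_of_mem hhit]
    -- the hitting time is at most n + m
    have hH : hitTime S (x + y) ω ≤ n + m := Nat.sInf_le hxy
    set H := hitTime S (x + y) ω with hHdef
    -- compare the exponents
    have hphi : phiSum φ (fun k => S k ω) H
        ≤ phiSum φ (fun k => S k ω) n + phiSum φ (fun k => S (n + k) ω - S n ω) m := by
      calc phiSum φ (fun k => S k ω) H
          ≤ phiSum φ (fun k => S k ω) (n + m) := phiSum_mono hφ _ hH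
        _ ≤ phiSum φ (fun k => S k ω) n
            + phiSum φ (fun k => (fun j => S j ω) (n + k) - (fun j => S j ω) n) m :=
            phiSum_split hφ (fun k => S k ω) n m
    have hlam' : lam * (H : ℝ) ≤ lam * ((n : ℝ) + (m : ℝ)) := by
      have : (H : ℝ) ≤ (n : ℝ) + (m : ℝ) := by exact_mod_cast hH
      exact mul_le_mul_of_nonneg_left this hlam
    -- identify the term value
    have hval : pterm φ S lam x y (n, m) ω
        = Real.exp (-(lam * ((n : ℝ) + (m : ℝ)))
            - (phiSum φ (fun k => S k ω) n + phiSum φ (fun k => S (n + k) ω - S n ω) m)) := by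
      rw [hrw (n, m)]
      have hin1 : ω ∈ fvEvt S x n := hA
      have hin2 : ω ∈ {ω' | fvisit (fun k => S (n + k) ω' - S n ω') y m} := hB
      rw [Set.indicator_of_mem hin1, Set.indicator_of_mem hin2]
      rw [← Real.exp_add, ← Real.exp_add]
      congr 1
      ring
    rw [hval, gfun_eq hφ]
    rw [Real.exp_le_exp]
    have h1 : 0 ≤ phiSum φ (fun k => S k ω) n + phiSum φ (fun k => S (n + k) ω - S n ω) m :=
      add_nonneg (phiSum_nonneg hφ _ _) (phiSum_nonneg hφ _ _)
    linarith [hphi, hlam']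
  -- conclude by cases on whether some term is nonzero
  by_cases hex : ∃ p ∈ u, pterm φ S lam x y p ω ≠ 0
  · obtain ⟨p₀, hp₀u, hp₀⟩ := hex
    have huniq : ∀ q ∈ u, q ≠ p₀ → pterm φ S lam x y q ω = 0 := by
      intro q hqu hqne
      by_contra hq
      obtain ⟨hA, hB⟩ := hmem q hq
      obtain ⟨hA₀, hB₀⟩ := hmem p₀ hp₀
      have h1 : q.1 = p₀.1 := fvisit_unique hA hA₀
      rw [h1] at hB
      have h2 : q.2 = p₀.2 := fvisit_unique hB hB₀
      exact hqne (Prod.ext h1 h2)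
    rw [Finset.sum_eq_single_of_mem p₀ hp₀u huniq]
    exact hbnd p₀
  · push_neg at hex
    rw [Finset.sum_eq_zero hex]
    exact hR0

lemma Ival_mul_le (hS : IsSRW P S) (hφ : IsGoodPhi φ) (hlam : 0 ≤ lam) (x y : Fin d → ℤ) :
    Ival P φ S lam x * Ival P φ S lam y ≤ Ival P φ S lam (x + y) := by
  have hA := hasSum_Ival hS hφ hlam x
  have hB := hasSum_Ival hS hφ hlam y
  set A : ℕ → ℝ := fun n => Real.exp (-(lam * (n : ℝ))) * aCoef P φ S x n with hAdef
  set B : ℕ → ℝ := fun m => Real.exp (-(lam * (m : ℝ))) * aCoef P φ S y m with hBdef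
  have hAnn : ∀ n, 0 ≤ A n := fun n =>
    mul_nonneg (Real.exp_pos _).le (aCoef_nonneg hS x n)
  have hBnn : ∀ m, 0 ≤ B m := fun m =>
    mul_nonneg (Real.exp_pos _).le (aCoef_nonneg hS y m)
  have hAnorm : Summable fun n => ‖A n‖ :=
    hA.summable.congr fun n => (Real.norm_of_nonneg (hAnn n)).symm
  have hBnorm : Summable fun m => ‖B m‖ :=
    hB.summable.congr fun m => (Real.norm_of_nonneg (hBnn m)).symm
  rw [← hA.tsum_eq, ← hB.tsum_eq, tsum_mul_tsum_of_summable_norm hAnorm hBnorm]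
  refine Summable.tsum_le_of_sum_le (summable_mul_of_summable_norm hAnorm hBnorm) fun u => ?_
  have hterm : ∀ p : ℕ × ℕ, A p.1 * B p.2 = ∫ ω, pterm φ S lam x y p ω ∂P := by
    intro p
    rw [integral_pterm hS hφ x y p]
    simp only [hAdef, hBdef]
    rw [show Real.exp (-(lam * ((p.1 : ℝ) + (p.2 : ℝ))))
        = Real.exp (-(lam * (p.1 : ℝ))) * Real.exp (-(lam * (p.2 : ℝ))) from by
      rw [← Real.exp_add]; congr 1; ring]
    ring
  rw [Finset.sum_congr rfl fun p _ => hterm p]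
  rw [← integral_finset_sum u fun p _ => integrable_pterm hS hφ hlam x y p]
  refine integral_mono ?_ ?_ ?_
  · exact integrable_finset_sum u fun p _ => integrable_pterm hS hφ hlam x y p
  · exact (integrable_gfun hS hφ hlam (x + y)).indicator (measurableSet_hits hS (x + y))
  · intro ω
    exact pterm_sum_le hS hφ hlam x y u ω

end Subadd6
section Subadd7
set_option linter.unusedSectionVars false
set_option linter.unusedVariables false

variable {d : ℕ} {Ω : Type*} [MeasurableSpace Ω]
variable {P : Measure Ω} [IsProbabilityMeasure P] {S : ℕ → Ω → Fin d → ℤ} {φ : ℝ → ℝ}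
  {lam : ℝ}

lemma phiSum_zero (φ : ℝ → ℝ) (w : ℕ → Fin d → ℤ) : phiSum φ w 0 = 0 := by
  unfold phiSum
  rw [show Finset.Icc 1 0 = (∅ : Finset ℕ) from Finset.Icc_eq_empty (by omega)]
  simp

lemma phiSum_one (φ : ℝ → ℝ) (w : ℕ → Fin d → ℤ) : phiSum φ w 1 = φ 1 := by
  unfold phiSum
  rw [Finset.Icc_self]
  rw [Finset.image_singleton]
  rw [Finset.sum_singleton]
  congr 1
  have : Finset.filter (fun m => w m = w 1) {1} = {1} := by
    refine Finset.filter_eq_self.2 fun m hm => ?_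
    rw [Finset.mem_singleton] at hm
    rw [hm]
  rw [this]
  simp

lemma Ival_zero (hS : IsSRW P S) (hφ : IsGoodPhi φ) : Ival P φ S lam 0 = 1 := by
  have h1 : ∀ ω, Set.indicator (hits S 0) (gfun φ S lam 0) ω = 1 := by
    intro ω
    have hmem : ω ∈ hits S (0 : Fin d → ℤ) := ⟨0, hS.1 ω⟩
    rw [Set.indicator_of_mem hmem]
    have hfv : fvisit (fun k => S k ω) (0 : Fin d → ℤ) 0 :=
      ⟨hS.1 ω, fun k hk => absurd hk (Nat.not_lt_zero k)⟩
    have hH : hitTime S (0 : Fin d → ℤ) ω = 0 := fvisit_hitTime hfv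
    rw [gfun_eq hφ, hH, phiSum_zero]
    norm_num
  unfold Ival
  rw [show (fun ω => Set.indicator (hits S (0 : Fin d → ℤ)) (gfun φ S lam 0) ω)
      = fun _ => (1 : ℝ) from funext h1]
  simp

lemma unitStep_ne_zero {s : Fin d → ℤ} (hs : s ∈ unitSteps d) : s ≠ 0 := by
  rcases Finset.mem_image.1 hs with ⟨p, _, rfl⟩
  intro h0
  have := congrFun h0 p.1
  simp only [if_pos rfl] at this
  rcases Bool.eq_false_or_eq_true p.2 with hb | hb <;> rw [hb] at this <;> simp at this

lemma stepDist_singleton_pos (hS : IsSRW P S) {s : Fin d → ℤ} (hs : s ∈ unitSteps d) :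
    stepDist d {s} ≠ 0 := by
  have hcard : 0 < (unitSteps d).card := Finset.card_pos.2 ⟨s, hs⟩
  unfold stepDist
  rw [Measure.smul_apply]
  rw [Measure.coe_finset_sum]
  simp only [Finset.sum_apply, smul_eq_mul]
  have hone : Measure.dirac s {s} = 1 := by
    rw [Measure.dirac_apply' _ (measurableSet_singleton s)]
    simp
  have hle : (1 : ENNReal) ≤ ∑ s' ∈ unitSteps d, Measure.dirac s' {s} := by
    rw [← hone]
    exact Finset.single_le_sum (f := fun s' => Measure.dirac s' {s}) (fun i _ => by positivity) hs
  intro hcon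
  rw [mul_eq_zero] at hcon
  rcases hcon with h | h
  · rw [ENNReal.inv_eq_zero] at h
    exact (ENNReal.natCast_ne_top _) h
  · rw [h] at hle
    simp at hle
  
lemma Ival_unit (hS : IsSRW P S) (hφ : IsGoodPhi φ) (hlam : 0 ≤ lam) {s : Fin d → ℤ}
    (hs : s ∈ unitSteps d) : 0 < Ival P φ S lam s := by
  classical
  set c : ℝ := Real.exp (-(lam * (1 : ℝ)) - φ 1) with hc
  set evt : Set Ω := Xinc S 0 ⁻¹' {s} with hevt
  have hmeas_evt : MeasurableSet evt :=
    (measurable_Xinc hS.2.1 0) (measurableSet_singleton s)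
  have hsne : s ≠ 0 := unitStep_ne_zero hs
  have hev : ∀ ω ∈ evt, Set.indicator (hits S s) (gfun φ S lam s) ω = c := by
    intro ω hω
    have hS1 : S 1 ω = s := by
      have h1 : Xinc S 0 ω = s := hω
      have h2 : Xinc S 0 ω = S 1 ω - S 0 ω := rfl
      rw [h2, hS.1 ω, sub_zero] at h1
      exact h1
    have hfv : fvisit (fun k => S k ω) s 1 := by
      refine ⟨hS1, fun k hk => ?_⟩
      have hk0 : k = 0 := by omega
      subst hk0
      show S 0 ω ≠ s
      rw [hS.1 ω]
      exact fun h => hsne h.symm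
    have hmem : ω ∈ hits S s := ⟨1, hS1⟩
    rw [Set.indicator_of_mem hmem, gfun_eq hφ, fvisit_hitTime hfv, phiSum_one]
    norm_num [hc]
  have hPev : 0 < (P evt).toReal := by
    have h1 : P evt = stepDist d {s} := Xinc_law hS 0 {s}
    refine ENNReal.toReal_pos ?_ (measure_ne_top P evt)
    rw [h1]
    exact stepDist_singleton_pos hS hs
  have hlow : ∀ ω, Set.indicator evt (fun _ => c) ω
      ≤ Set.indicator (hits S s) (gfun φ S lam s) ω := by
    intro ω
    by_cases hω : ω ∈ evt
    · rw [Set.indicator_of_mem hω, hev ω hω]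
    · rw [Set.indicator_of_notMem hω]
      exact Set.indicator_nonneg (fun ω' _ => gfun_nonneg s ω') ω
  have hint : ∫ ω, Set.indicator evt (fun _ => c) ω ∂P
      ≤ Ival P φ S lam s := by
    refine integral_mono ?_ ?_ hlow
    · exact (integrable_const c).indicator hmeas_evt
    · exact (integrable_gfun hS hφ hlam s).indicator (measurableSet_hits hS s)
  have hval : ∫ ω, Set.indicator evt (fun _ => c) ω ∂P = (P evt).toReal • c :=
    integral_indicator_const c hmeas_evt
  rw [hval] at hint
  have : (0 : ℝ) < (P evt).toReal • c := by
    rw [smul_eq_mul]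
    exact mul_pos hPev (Real.exp_pos _)
  linarith

lemma Ival_pos (hS : IsSRW P S) (hφ : IsGoodPhi φ) (hlam : 0 ≤ lam) (x : Fin d → ℤ) :
    0 < Ival P φ S lam x := by
  classical
  suffices h : ∀ (N : ℕ) (z : Fin d → ℤ), (∑ i, (z i).natAbs) = N → 0 < Ival P φ S lam z by
    exact h (∑ i, (x i).natAbs) x rfl
  intro N
  induction N with
  | zero =>
    intro z hz
    have hz0 : z = 0 := by
      funext i
      have : (z i).natAbs = 0 := by
        by_contra hne
        have h1 : 0 < (z i).natAbs := Nat.pos_of_ne_zero hne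
        have h2 : (z i).natAbs ≤ ∑ j, (z j).natAbs :=
          Finset.single_le_sum (f := fun j => (z j).natAbs)
            (fun j _ => Nat.zero_le _) (Finset.mem_univ i)
        omega
      exact Int.natAbs_eq_zero.1 this
    rw [hz0, Ival_zero hS hφ]
    norm_num
  | succ N ih =>
    intro z hz
    have hex : ∃ i, z i ≠ 0 := by
      by_contra hcon
      push_neg at hcon
      have : ∑ i, (z i).natAbs = 0 := by
        refine Finset.sum_eq_zero fun i _ => ?_
        rw [hcon i]
        rfl
      omega
    obtain ⟨i, hi⟩ := hex
    set s : Fin d → ℤ := fun j => if j = i then (if 0 < z i then 1 else -1) else 0 with hsdef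
    have hs : s ∈ unitSteps d := by
      refine Finset.mem_image.2 ⟨(i, decide (0 < z i)), Finset.mem_univ _, ?_⟩
      funext j
      by_cases hj : j = i
      · simp [hsdef, hj]
      · simp [hsdef, hj]
    set y : Fin d → ℤ := z - s with hydef
    have hyi : y i = z i - (if 0 < z i then 1 else -1) := by
      simp [hydef, hsdef]
    have hyj : ∀ j, j ≠ i → y j = z j := by
      intro j hj
      simp [hydef, hsdef, hj]
    have hysum : (∑ j, (y j).natAbs) = N := by
      have h1 : ∑ j, (z j).natAbs
          = (z i).natAbs + ∑ j ∈ Finset.univ.erase i, (z j).natAbs :=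
        (Finset.add_sum_erase Finset.univ _ (Finset.mem_univ i)).symm
      have h2 : ∑ j, (y j).natAbs
          = (y i).natAbs + ∑ j ∈ Finset.univ.erase i, (y j).natAbs :=
        (Finset.add_sum_erase Finset.univ _ (Finset.mem_univ i)).symm
      have h3 : ∑ j ∈ Finset.univ.erase i, (y j).natAbs
          = ∑ j ∈ Finset.univ.erase i, (z j).natAbs := by
        refine Finset.sum_congr rfl fun j hj => ?_
        rw [hyj j (Finset.ne_of_mem_erase hj)]
      have h4 : (y i).natAbs + 1 = (z i).natAbs := by
        rw [hyi]
        by_cases h0 : 0 < z i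
        · rw [if_pos h0]; omega
        · rw [if_neg h0]; omega
      omega
    have hzy : s + y = z := by
      rw [hydef]
      abel
    have hys := ih y hysum
    have hu := Ival_unit hS hφ hlam hs
    have hkey := Ival_mul_le hS hφ hlam s y
    rw [hzy] at hkey
    calc (0 : ℝ) < Ival P φ S lam s * Ival P φ S lam y := mul_pos hu hys
      _ ≤ Ival P φ S lam z := hkey

end Subadd7
/-- **Subadditivity of the annealed two-point function** (Flury, (8)). For every `λ ≥ 0`
and all `x, y ∈ ℤ^d`, `b_λ(x + y) ≤ b_λ(x) + b_λ(y)`. -/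
theorem annealed_two_point_subadditive
    {d : ℕ} (hd : 0 < d)
    {Ω : Type*} [MeasurableSpace Ω] (P : Measure Ω) [IsProbabilityMeasure P]
    (S : ℕ → Ω → Fin d → ℤ) (hS : IsSRW P S)
    (φ : ℝ → ℝ) (hφ : IsGoodPhi φ) :
    ∀ lam : ℝ, 0 ≤ lam → ∀ x y : Fin d → ℤ,
      twoPointB P φ S lam (x + y) ≤ twoPointB P φ S lam x + twoPointB P φ S lam y := by
  intro lam hlam x y
  have px := Ival_pos hS hφ hlam x
  have py := Ival_pos hS hφ hlam y
  have key := Ival_mul_le hS hφ hlam x y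
  rw [twoPointB_eq, twoPointB_eq, twoPointB_eq]
  have hlog : Real.log (Ival P φ S lam x * Ival P φ S lam y)
      = Real.log (Ival P φ S lam x) + Real.log (Ival P φ S lam y) :=
    Real.log_mul px.ne' py.ne'
  have hle : Real.log (Ival P φ S lam x * Ival P φ S lam y)
      ≤ Real.log (Ival P φ S lam (x + y)) :=
    Real.log_le_log (mul_pos px py) key
  rw [hlog] at hle
  linarith

end RWRP
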